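/- arXiv:1906.10106 — 5 statements merged into one kernel-verified Lean document; each statement's English description precedes it below -/
import Mathlib

section
/- Let Δ be a proper+ KB and α a ground formula. Then Δ ⊨ α (every model satisfying all ∀-clauses of Δ satisfies α) if and only if GND⁻(Δ ∧ ¬α) is unsatisfiable, where Δ ∧ ¬α denotes the set of ∀-clauses Δ together with the ground formula ¬α, and GND⁻ grounds it over the names mentioned in Δ and α plus z arbitrary new names, z being the rank of Δ. That is, first-order entailment of a ground query from a proper+ KB reduces to unsatisfiability of a finite grounding. -/
namespace ImplicitFOL

attribute [local instance] Classical.propDecidable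

/-- Ground atoms: a predicate symbol applied to a tuple of names (natural numbers). -/
def GAtom {Pred : Type} (ar : Pred → ℕ) : Type :=
  Σ P : Pred, Fin (ar P) → ℕ

/-- A model assigns a Boolean value to every ground atom. -/
abbrev Model {Pred : Type} (ar : Pred → ℕ) : Type := GAtom ar → Bool

/-- A partial model maps every ground atom to {0,1,*}; `none` plays the role of `*`. -/
abbrev PartialModel {Pred : Type} (ar : Pred → ℕ) : Type := GAtom ar → Option Bool

/-- A literal: an atom or its negation (`true` = positive). -/
abbrev Lit {Pred : Type} (ar : Pred → ℕ) : Type := Bool × GAtom ar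

/-- A ground clause: a finite disjunction of literals. -/
abbrev Clause {Pred : Type} (ar : Pred → ℕ) : Type := Finset (Lit ar)

/-- Terms occurring in non-ground atoms: variables or names. -/
inductive Term : Type
  | var : ℕ → Term
  | name : ℕ → Term
  deriving DecidableEq

/-- Formulas built from acceptable equalities `x = a` using ¬, ∨, ∧. -/
inductive EqForm : Type
  | eq : ℕ → ℕ → EqForm
  | not : EqForm → EqForm
  | or : EqForm → EqForm → EqForm
  | and : EqForm → EqForm → EqForm
  deriving DecidableEq

/-- Non-ground atoms: a predicate applied to a tuple of terms. -/
def NGAtom {Pred : Type} (ar : Pred → ℕ) : Type :=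
  Σ P : Pred, Fin (ar P) → Term

/-- A ∀-clause ∀(e ⊃ c): `e` built from acceptable equalities, `c` a disjunction of atoms. -/
structure VClause {Pred : Type} (ar : Pred → ℕ) : Type where
  e : EqForm
  c : List (NGAtom ar)

/-- Ground formulas over atoms of type `A` (with truth constants). -/
inductive Form (A : Type) : Type
  | tru : Form A
  | fls : Form A
  | atom : A → Form A
  | not : Form A → Form A
  | or : Form A → Form A → Form A
  | and : Form A → Form A → Form A
  | imp : Form A → Form A → Form A

namespace Form

variable {A : Type}

/-- Evaluation of a ground formula in a model. -/
def eval (M : A → Bool) : Form A → Bool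
  | tru => true
  | fls => false
  | atom a => M a
  | not φ => !(eval M φ)
  | or φ ψ => eval M φ || eval M ψ
  | and φ ψ => eval M φ && eval M ψ
  | imp φ ψ => !(eval M φ) || eval M ψ

/-- Witnessed evaluation in a partial model: `some true`/`some false` mean
witnessed true/false, `none` means neither. -/
def wit (N : A → Option Bool) : Form A → Option Bool
  | tru => some true
  | fls => some false
  | atom a => N a
  | not φ => (wit N φ).map fun b => !b
  | or φ ψ =>
    match wit N φ, wit N ψ with
    | some true, _ => some true
    | _, some true => some true
    | some false, some false => some false
    | _, _ => none
  | and φ ψ =>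
    match wit N φ, wit N ψ with
    | some false, _ => some false
    | _, some false => some false
    | some true, some true => some true
    | _, _ => none
  | imp φ ψ =>
    match wit N φ, wit N ψ with
    | some false, _ => some true
    | _, some true => some true
    | some true, some false => some false
    | _, _ => none

/-- Restriction of a ground formula under a partial model. -/
def restrict (N : A → Option Bool) : Form A → Form A
  | tru => tru
  | fls => fls
  | atom a =>
    match N a with
    | some true => tru
    | some false => fls
    | none => atom a
  | not φ => not (restrict N φ)
  | or φ ψ => or (restrict N φ) (restrict N ψ)
  | and φ ψ => and (restrict N φ) (restrict N ψ)
  | imp φ ψ => imp (restrict N φ) (restrict N ψ)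

end Form

variable {Pred : Type} {ar : Pred → ℕ}

/-- A partial model `N` is consistent with a model `M`. -/
def Consistent (N : PartialModel ar) (M : Model ar) : Prop :=
  ∀ (p : GAtom ar) (b : Bool), N p = some b → M p = b

/-- A literal is true in a model. -/
def litTrue (M : Model ar) (l : Lit ar) : Prop := M l.2 = l.1

/-- A model satisfies a clause iff some literal of it is true. -/
def clauseTrue (M : Model ar) (c : Clause ar) : Prop := ∃ l ∈ c, litTrue M l

/-- Negation of a literal. -/
def negLit (l : Lit ar) : Lit ar := (!l.1, l.2)

/-- Names mentioned in a ground atom. -/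
def GAtom.names (a : GAtom ar) : Finset ℕ := Finset.image a.2 Finset.univ

/-- Names mentioned in a ground formula. -/
def Form.namesOf : Form (GAtom ar) → Finset ℕ
  | .tru => ∅
  | .fls => ∅
  | .atom a => GAtom.names a
  | .not φ => Form.namesOf φ
  | .or φ ψ => Form.namesOf φ ∪ Form.namesOf ψ
  | .and φ ψ => Form.namesOf φ ∪ Form.namesOf ψ
  | .imp φ ψ => Form.namesOf φ ∪ Form.namesOf ψ

/-- Names mentioned in a ground clause. -/
def Clause.namesOf (c : Clause ar) : Finset ℕ := c.sup fun l => GAtom.names l.2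

def Term.subst (θ : ℕ → ℕ) : Term → ℕ
  | .var v => θ v
  | .name n => n

def Term.namesOf : Term → Finset ℕ
  | .var _ => ∅
  | .name n => {n}

def Term.varsOf : Term → Finset ℕ
  | .var v => {v}
  | .name _ => ∅

/-- Evaluation of an equality formula under a substitution of names for variables. -/
def EqForm.eval (θ : ℕ → ℕ) : EqForm → Bool
  | .eq v n => θ v == n
  | .not e => !(EqForm.eval θ e)
  | .or e₁ e₂ => EqForm.eval θ e₁ || EqForm.eval θ e₂
  | .and e₁ e₂ => EqForm.eval θ e₁ && EqForm.eval θ e₂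

def EqForm.namesOf : EqForm → Finset ℕ
  | .eq _ n => {n}
  | .not e => EqForm.namesOf e
  | .or e₁ e₂ => EqForm.namesOf e₁ ∪ EqForm.namesOf e₂
  | .and e₁ e₂ => EqForm.namesOf e₁ ∪ EqForm.namesOf e₂

def EqForm.varsOf : EqForm → Finset ℕ
  | .eq v _ => {v}
  | .not e => EqForm.varsOf e
  | .or e₁ e₂ => EqForm.varsOf e₁ ∪ EqForm.varsOf e₂
  | .and e₁ e₂ => EqForm.varsOf e₁ ∪ EqForm.varsOf e₂

def NGAtom.subst (θ : ℕ → ℕ) (a : NGAtom ar) : GAtom ar :=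
  ⟨a.1, fun i => Term.subst θ (a.2 i)⟩

def NGAtom.namesOf (a : NGAtom ar) : Finset ℕ :=
  Finset.univ.biUnion fun i => Term.namesOf (a.2 i)

def NGAtom.varsOf (a : NGAtom ar) : Finset ℕ :=
  Finset.univ.biUnion fun i => Term.varsOf (a.2 i)

/-- Variables mentioned in a ∀-clause. -/
def VClause.varsOf (vc : VClause ar) : Finset ℕ :=
  EqForm.varsOf vc.e ∪ vc.c.foldr (fun a s => NGAtom.varsOf a ∪ s) ∅

/-- Names mentioned in a ∀-clause. -/
def VClause.namesOf (vc : VClause ar) : Finset ℕ :=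
  EqForm.namesOf vc.e ∪ vc.c.foldr (fun a s => NGAtom.namesOf a ∪ s) ∅

/-- The ground clause cθ obtained by applying the substitution θ to the clause part. -/
noncomputable def VClause.ground (vc : VClause ar) (θ : ℕ → ℕ) : Clause ar :=
  (vc.c.map fun a => ((true : Bool), NGAtom.subst θ a)).toFinset

/-- Substitutional satisfaction of a ∀-clause: every instance whose equality
condition holds is a true clause. -/
def VClause.sat (M : Model ar) (vc : VClause ar) : Prop :=
  ∀ θ : ℕ → ℕ, EqForm.eval θ vc.e = true → clauseTrue M (VClause.ground vc θ)

/-- Names mentioned in a KB. -/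
def kbNames (Δ : Finset (VClause ar)) : Finset ℕ := Δ.sup VClause.namesOf

/-- Rank of a KB: maximum number of variables mentioned in any ∀-clause of it. -/
def rank (Δ : Finset (VClause ar)) : ℕ := Δ.sup fun vc => (VClause.varsOf vc).card

/-- GND(Δ): grounding over all names. -/
def gnd (Δ : Finset (VClause ar)) : Set (Clause ar) :=
  { g | ∃ vc ∈ Δ, ∃ θ : ℕ → ℕ, EqForm.eval θ vc.e = true ∧ g = VClause.ground vc θ }

/-- GND(Δ, C): grounding over the names mentioned in Δ together with those in C. -/
def gndOver (Δ : Finset (VClause ar)) (C : Finset ℕ) : Set (Clause ar) :=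
  { g | ∃ vc ∈ Δ, ∃ θ : ℕ → ℕ, (∀ v, θ v ∈ kbNames Δ ∪ C) ∧
          EqForm.eval θ vc.e = true ∧ g = VClause.ground vc θ }

/-- A literal is made true by a partial model. -/
def litTrueN (N : PartialModel ar) (l : Lit ar) : Prop := N l.2 = some l.1

/-- A literal is made false by a partial model. -/
def litFalseN (N : PartialModel ar) (l : Lit ar) : Prop := N l.2 = some (!l.1)

/-- A ∀-clause is witnessed true in `N` for the set of names `C`: every grounding
over `C` whose equality condition holds yields a clause with a literal true under `N`. -/
def VClause.witnessed (N : PartialModel ar) (C : Finset ℕ) (vc : VClause ar) : Prop :=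
  ∀ θ : ℕ → ℕ, (∀ v, θ v ∈ C) → EqForm.eval θ vc.e = true →
    ∃ l ∈ VClause.ground vc θ, litTrueN N l

/-- U(s): the least superset of `s` closed under unit propagation. -/
inductive UP (s : Set (Clause ar)) : Clause ar → Prop
  | base {c : Clause ar} : c ∈ s → UP s c
  | unit {l : Lit ar} {c : Clause ar} :
      UP s {l} → UP s (insert (negLit l) c) → UP s c

/-- V(s): all weakenings of clauses of U(s). -/
def Vset (s : Set (Clause ar)) : Set (Clause ar) := { c | ∃ c', UP s c' ∧ c' ⊆ c }

/-- Limited entailment `s ⊨_z φ`. -/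
def entailsAt : ℕ → Set (Clause ar) → Clause ar → Prop
  | 0, s, φ => φ ∈ Vset s
  | z + 1, s, φ => ∃ c ∈ s, ∀ l ∈ c, entailsAt z (insert ({l} : Clause ar) s) φ

/-- Restriction of a ground clause under a partial model: `none` is the constant
true (some literal is made true by `N`); otherwise false literals are deleted. -/
noncomputable def restrictClause (N : PartialModel ar) (c : Clause ar) : Option (Clause ar) :=
  if ∃ l ∈ c, litTrueN N l then none else some (c.filter fun l => ¬ litFalseN N l)

/-- Restriction of a set of ground clauses (constant-true clauses are dropped). -/
def restrictSet (N : PartialModel ar) (F : Set (Clause ar)) : Set (Clause ar) :=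
  { c' | ∃ c ∈ F, restrictClause N c = some c' }

/-- Satisfaction of a possibly-trivially-true restricted clause. -/
def optClauseTrue (M : Model ar) : Option (Clause ar) → Prop
  | none => True
  | some c => clauseTrue M c

/-- Limited entailment where the constant true is deemed entailed at every level. -/
def entailsAtOpt (z : ℕ) (s : Set (Clause ar)) : Option (Clause ar) → Prop
  | none => True
  | some φ => entailsAt z s φ


variable [Countable Pred]

/-! ### Auxiliary lemmas for statement1 -/

lemma eqform_vars_nonempty (e : EqForm) : (EqForm.varsOf e).Nonempty := by
  induction e with
  | eq v n => exact ⟨v, by simp [EqForm.varsOf]⟩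
  | not e ih => exact ih
  | or e₁ e₂ ih₁ ih₂ => exact Finset.Nonempty.mono Finset.subset_union_left ih₁
  | and e₁ e₂ ih₁ ih₂ => exact Finset.Nonempty.mono Finset.subset_union_left ih₁

lemma rank_pos (Δ : Finset (VClause ar)) (hne : Δ.Nonempty) : 1 ≤ rank Δ := by
  obtain ⟨vc, hvc⟩ := hne
  have h1 : 1 ≤ (VClause.varsOf vc).card := by
    refine Finset.card_pos.mpr ?_
    exact Finset.Nonempty.mono Finset.subset_union_left (eqform_vars_nonempty vc.e)
  exact le_trans h1 (Finset.le_sup (f := fun vc => (VClause.varsOf vc).card) hvc)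

lemma eqform_names_sub {Δ : Finset (VClause ar)} {vc : VClause ar} (hvc : vc ∈ Δ) :
    EqForm.namesOf vc.e ⊆ kbNames Δ :=
  Finset.Subset.trans Finset.subset_union_left (Finset.le_sup (f := VClause.namesOf) hvc)

lemma atom_names_sub_foldr {a : NGAtom ar} :
    ∀ (l : List (NGAtom ar)), a ∈ l →
      NGAtom.namesOf a ⊆ l.foldr (fun a s => NGAtom.namesOf a ∪ s) ∅ := by
  intro l hl
  induction l with
  | nil => simp at hl
  | cons b t ih =>
    rcases List.mem_cons.mp hl with h | h
    · subst h; exact Finset.subset_union_left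
    · exact Finset.Subset.trans (ih h) Finset.subset_union_right

lemma atom_names_sub {Δ : Finset (VClause ar)} {vc : VClause ar} (hvc : vc ∈ Δ)
    {a : NGAtom ar} (ha : a ∈ vc.c) : NGAtom.namesOf a ⊆ kbNames Δ := by
  refine Finset.Subset.trans ?_ (Finset.le_sup (f := VClause.namesOf) hvc)
  exact Finset.Subset.trans (atom_names_sub_foldr vc.c ha) Finset.subset_union_right

lemma eqform_eval_rename {B : Finset ℕ} (ι θ : ℕ → ℕ)
    (hfix : ∀ x ∈ B, ι x = x) (hout : ∀ x, x ∉ B → ι x ∉ B) :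
    ∀ e : EqForm, EqForm.namesOf e ⊆ B →
      EqForm.eval (fun v => ι (θ v)) e = EqForm.eval θ e := by
  intro e
  induction e with
  | eq v n =>
    intro hsub
    have hn : n ∈ B := hsub (by simp [EqForm.namesOf])
    show (ι (θ v) == n) = (θ v == n)
    by_cases hv : θ v ∈ B
    · rw [hfix _ hv]
    · have h1 : ι (θ v) ≠ n := fun h => hout _ hv (h ▸ hn)
      have h2 : θ v ≠ n := fun h => hv (h ▸ hn)
      simp [h1, h2]
  | not e ih =>
    intro hsub
    show (!(EqForm.eval _ e)) = (!(EqForm.eval θ e))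
    rw [ih hsub]
  | or e₁ e₂ ih₁ ih₂ =>
    intro hsub
    show (EqForm.eval _ e₁ || EqForm.eval _ e₂) = _
    rw [ih₁ (Finset.Subset.trans Finset.subset_union_left hsub),
        ih₂ (Finset.Subset.trans Finset.subset_union_right hsub)]
    rfl
  | and e₁ e₂ ih₁ ih₂ =>
    intro hsub
    show (EqForm.eval _ e₁ && EqForm.eval _ e₂) = _
    rw [ih₁ (Finset.Subset.trans Finset.subset_union_left hsub),
        ih₂ (Finset.Subset.trans Finset.subset_union_right hsub)]
    rfl

/-- Theorem: first-order entailment of a ground query from a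
proper⁺ KB reduces to unsatisfiability of a finite grounding:
Δ ⊨ α iff GND⁻(Δ ∧ ¬α) is unsatisfiable, where the grounding is over the names
of Δ and α plus `rank Δ` arbitrary new names. -/
theorem statement1
    (Δ : Finset (VClause ar)) (hne : Δ.Nonempty) (α : Form (GAtom ar)) :
    (∀ M : Model ar, (∀ vc ∈ Δ, VClause.sat M vc) → Form.eval M α = true) ↔
      (∀ E : Finset ℕ, E.card = rank Δ → Disjoint E (kbNames Δ ∪ Form.namesOf α) →
        ¬ ∃ M : Model ar,
            (∀ g ∈ gndOver Δ (Form.namesOf α ∪ E), clauseTrue M g) ∧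
            Form.eval M α = false) := by
  classical
  constructor
  · -- hard direction: entailment implies unsatisfiability of the finite grounding
    intro h E hcard hdisj
    rintro ⟨M, hM, hα⟩
    set B : Finset ℕ := kbNames Δ ∪ Form.namesOf α with hB
    have hEB : ∀ x ∈ E, x ∉ B := fun x hx => Finset.disjoint_left.mp hdisj hx
    have hEne : E.Nonempty := Finset.card_pos.mp (by rw [hcard]; exact rank_pos Δ hne)
    obtain ⟨e₀, he₀⟩ := hEne
    -- the collapsing renaming
    set ι : ℕ → ℕ := fun x => if x ∈ B then x else e₀ with hι
    have hfix : ∀ x ∈ B, ι x = x := fun x hx => if_pos hx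
    have hιE : ∀ x, x ∉ B → ι x = e₀ := fun x hx => if_neg hx
    have hout : ∀ x, x ∉ B → ι x ∉ B := fun x hx => by rw [hιE x hx]; exact hEB e₀ he₀
    have hinE : ∀ x, x ∉ B → ι x ∈ E := fun x hx => by rw [hιE x hx]; exact he₀
    -- the extended model
    set M' : Model ar := fun p =>
      decide (∃ κ : ℕ → ℕ, (∀ x ∈ B, κ x = x) ∧ (∀ x, x ∉ B → κ x ∈ E) ∧
        M ⟨p.1, fun i => κ (p.2 i)⟩ = true) with hM'
    have hsat : ∀ vc ∈ Δ, VClause.sat M' vc := by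
      intro vc hvc θ hθ
      have hterm : ∀ a ∈ vc.c, NGAtom.subst (fun v => ι (θ v)) a =
          ⟨(NGAtom.subst θ a).1, fun i => ι ((NGAtom.subst θ a).2 i)⟩ := by
        intro a ha
        refine Sigma.ext rfl (heq_of_eq (funext fun i => ?_))
        show Term.subst (fun v => ι (θ v)) (a.2 i) = ι (Term.subst θ (a.2 i))
        cases ht : a.2 i with
        | var v => rfl
        | name n =>
          show n = ι n
          have hn : n ∈ kbNames Δ := by
            refine atom_names_sub hvc ha ?_
            refine Finset.mem_biUnion.mpr ⟨i, Finset.mem_univ i, ?_⟩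
            rw [ht]; simp [Term.namesOf]
          exact (hfix n (Finset.mem_union_left _ hn)).symm
      have hmem : VClause.ground vc (fun v => ι (θ v)) ∈
          gndOver Δ (Form.namesOf α ∪ E) := by
        refine ⟨vc, hvc, fun v => ι (θ v), ?_, ?_, rfl⟩
        · intro v
          show ι (θ v) ∈ kbNames Δ ∪ (Form.namesOf α ∪ E)
          by_cases hv : θ v ∈ B
          · rw [hfix _ hv]
            rcases Finset.mem_union.mp hv with h | h
            · exact Finset.mem_union_left _ h
            · exact Finset.mem_union_right _ (Finset.mem_union_left _ h)
          · exact Finset.mem_union_right _ (Finset.mem_union_right _ (hinE _ hv))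
        · rw [eqform_eval_rename ι θ hfix hout vc.e
            (Finset.Subset.trans (eqform_names_sub hvc) Finset.subset_union_left)]
          exact hθ
      obtain ⟨l, hl, hlt⟩ := hM _ hmem
      rw [VClause.ground, List.mem_toFinset, List.mem_map] at hl
      obtain ⟨a, ha, rfl⟩ := hl
      refine ⟨(true, NGAtom.subst θ a), ?_, ?_⟩
      · rw [VClause.ground, List.mem_toFinset, List.mem_map]
        exact ⟨a, ha, rfl⟩
      · show M' (NGAtom.subst θ a) = true
        rw [hM']
        refine decide_eq_true ⟨ι, hfix, hinE, ?_⟩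
        have : M (NGAtom.subst (fun v => ι (θ v)) a) = true := hlt
        rwa [hterm a ha] at this
    have hval : ∀ φ : Form (GAtom ar), Form.namesOf φ ⊆ B →
        Form.eval M' φ = Form.eval M φ := by
      intro φ
      induction φ with
      | tru => intro _; rfl
      | fls => intro _; rfl
      | atom a =>
        intro hsub
        have hnames : GAtom.names a ⊆ B := hsub
        have key : ∀ κ : ℕ → ℕ, (∀ x ∈ B, κ x = x) →
            (fun i => κ (a.2 i)) = a.2 := by
          intro κ hκ
          funext i
          exact hκ _ (hnames (Finset.mem_image.mpr ⟨i, Finset.mem_univ i, rfl⟩))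
        show M' a = M a
        rw [hM']
        cases hMa : M a with
        | false =>
          refine decide_eq_false ?_
          rintro ⟨κ, hκ, -, hMt⟩
          rw [key κ hκ] at hMt
          have : (⟨a.1, a.2⟩ : GAtom ar) = a := rfl
          rw [this, hMa] at hMt
          exact Bool.false_ne_true hMt
        | true =>
          refine decide_eq_true ⟨ι, hfix, hinE, ?_⟩
          rw [key ι hfix]
          exact hMa
      | not φ ih =>
        intro hsub
        show (!(Form.eval M' φ)) = (!(Form.eval M φ))
        rw [ih hsub]
      | or φ ψ ihφ ihψ =>
        intro hsub
        show (Form.eval M' φ || Form.eval M' ψ) = _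
        rw [ihφ (Finset.Subset.trans Finset.subset_union_left hsub),
            ihψ (Finset.Subset.trans Finset.subset_union_right hsub)]
        rfl
      | and φ ψ ihφ ihψ =>
        intro hsub
        show (Form.eval M' φ && Form.eval M' ψ) = _
        rw [ihφ (Finset.Subset.trans Finset.subset_union_left hsub),
            ihψ (Finset.Subset.trans Finset.subset_union_right hsub)]
        rfl
      | imp φ ψ ihφ ihψ =>
        intro hsub
        show (!(Form.eval M' φ) || Form.eval M' ψ) = _
        rw [ihφ (Finset.Subset.trans Finset.subset_union_left hsub),
            ihψ (Finset.Subset.trans Finset.subset_union_right hsub)]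
        rfl
    have htrue := h M' hsat
    rw [hval α Finset.subset_union_right, hα] at htrue
    exact Bool.false_ne_true htrue
  · -- easy direction
    intro h M hM
    by_contra hα'
    have hα : Form.eval M α = false := Bool.eq_false_iff.mpr hα'
    set B : Finset ℕ := kbNames Δ ∪ Form.namesOf α with hB
    set m : ℕ := B.sup id + 1 with hm
    set E : Finset ℕ := (Finset.range (rank Δ)).image (fun i => i + m) with hE
    have hcard : E.card = rank Δ := by
      rw [hE, Finset.card_image_of_injective _ (add_left_injective m),
        Finset.card_range]
    have hdisj : Disjoint E (kbNames Δ ∪ Form.namesOf α) := by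
      rw [Finset.disjoint_left]
      intro x hx hxB
      obtain ⟨i, -, rfl⟩ := Finset.mem_image.mp hx
      have h1 : id (i + m) ≤ B.sup id := Finset.le_sup (f := id) hxB
      simp only [id] at h1
      omega
    refine h E hcard hdisj ⟨M, ?_, hα⟩
    rintro g ⟨vc, hvc, θ, -, he, rfl⟩
    exact hM vc hvc θ he

end ImplicitFOL
end

section
/- Let α = ∀x φ(x) be a ∀-clause of rank 1, i.e., φ(x) = e(x) ⊃ c(x) with e built from acceptable equalities in the single variable x and c a disjunction of atoms in x. Let C be the set of names mentioned in GND(α, 1) (the names mentioned in α plus one arbitrary new name). Then for every name a ∈ ℕ there exists b ∈ C such that φ(a) is valid if and only if φ(b) is valid (where a ground formula is valid iff it is true in every model). -/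
namespace ImplicitFOL

attribute [local instance] Classical.propDecidable

variable {Pred : Type} {ar : Pred → ℕ}

lemma eqform_eval_const_eq (e : EqForm) (a b : ℕ)
    (ha : a ∉ EqForm.namesOf e) (hb : b ∉ EqForm.namesOf e) :
    EqForm.eval (fun _ => a) e = EqForm.eval (fun _ => b) e := by
  induction e with
  | eq v n =>
      simp [EqForm.namesOf] at ha hb
      simp [EqForm.eval, ha, hb]
  | not e ih => simp [EqForm.eval, ih ha hb]
  | or e₁ e₂ ih₁ ih₂ =>
      simp [EqForm.namesOf] at ha hb
      simp [EqForm.eval, ih₁ ha.1 hb.1, ih₂ ha.2 hb.2]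
  | and e₁ e₂ ih₁ ih₂ =>
      simp [EqForm.namesOf] at ha hb
      simp [EqForm.eval, ih₁ ha.1 hb.1, ih₂ ha.2 hb.2]

lemma list_foldr_names {l : List (NGAtom ar)} {g : NGAtom ar} (h : g ∈ l) :
    NGAtom.namesOf g ⊆ l.foldr (fun a s => NGAtom.namesOf a ∪ s) ∅ := by
  induction l with
  | nil => cases h
  | cons hd tl ih =>
      rcases List.mem_cons.mp h with rfl | h'
      · exact fun x hx => by simp [List.foldr]; exact Or.inl hx
      · exact fun x hx => by simp [List.foldr]; exact Or.inr (ih h' hx)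

lemma atom_names_subset (vc : VClause ar) {g : NGAtom ar} (h : g ∈ vc.c) :
    NGAtom.namesOf g ⊆ VClause.namesOf vc :=
  Finset.Subset.trans (list_foldr_names h) Finset.subset_union_right

lemma key_dir (vc : VClause ar) (a b : ℕ)
    (ha : a ∉ VClause.namesOf vc) (hb : b ∉ VClause.namesOf vc)
    (H : ∀ M : Model ar, EqForm.eval (fun _ => a) vc.e = true →
          clauseTrue M (VClause.ground vc fun _ => a)) :
    ∀ M : Model ar, EqForm.eval (fun _ => b) vc.e = true →
          clauseTrue M (VClause.ground vc fun _ => b) := by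
  intro M hev
  have hae : a ∉ EqForm.namesOf vc.e := fun h => ha (Finset.mem_union_left _ h)
  have hbe : b ∉ EqForm.namesOf vc.e := fun h => hb (Finset.mem_union_left _ h)
  have heva : EqForm.eval (fun _ => a) vc.e = true := by
    rw [eqform_eval_const_eq vc.e a b hae hbe]; exact hev
  set σ := Equiv.swap a b with hσ
  set M' : Model ar := fun p => M ⟨p.1, fun i => σ (p.2 i)⟩ with hM'
  -- key: for at ∈ vc.c, subst (const b) at = mapσ (subst (const a) at)
  have hsub : ∀ g : NGAtom ar, g ∈ vc.c →
      NGAtom.subst (fun _ => b) g =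
        ⟨(NGAtom.subst (fun _ => a) g).1,
          fun i => σ ((NGAtom.subst (fun _ => a) g).2 i)⟩ := by
    intro g hat
    have hnames := atom_names_subset vc hat
    unfold NGAtom.subst
    refine Sigma.ext rfl (heq_of_eq ?_)
    funext i
    show Term.subst (fun _ => b) (g.2 i) = σ (Term.subst (fun _ => a) (g.2 i))
    cases ht : g.2 i with
    | var v => simp [Term.subst, hσ, Equiv.swap_apply_left]
    | name n =>
        have hn : n ∈ NGAtom.namesOf g := by
          unfold NGAtom.namesOf
          exact Finset.mem_biUnion.mpr ⟨i, Finset.mem_univ i, by simp [ht, Term.namesOf]⟩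
        have hn' := hnames hn
        have h1 : n ≠ a := fun h => ha (h ▸ hn')
        have h2 : n ≠ b := fun h => hb (h ▸ hn')
        simp [Term.subst, hσ, Equiv.swap_apply_of_ne_of_ne h1 h2]
  have := H M' heva
  rcases this with ⟨l, hl, hlt⟩
  rcases List.mem_map.mp ((List.mem_toFinset).mp hl) with ⟨g, hat, rfl⟩
  refine ⟨(true, NGAtom.subst (fun _ => b) g), ?_, ?_⟩
  · exact List.mem_toFinset.mpr (List.mem_map.mpr ⟨g, hat, rfl⟩)
  · unfold litTrue at hlt ⊢
    rw [hsub g hat]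
    exact hlt

variable [Countable Pred]

/-- for a ∀-clause α = ∀x φ(x) of rank 1, letting C be the names
of α plus one arbitrary new name b₀, every name a ∈ ℕ has some b ∈ C with
"φ(a) is valid iff φ(b) is valid". -/
theorem statement2
    (vc : VClause ar) (hrank : (VClause.varsOf vc).card = 1)
    (b₀ : ℕ) (hb₀ : b₀ ∉ VClause.namesOf vc) (a : ℕ) :
    ∃ b ∈ VClause.namesOf vc ∪ {b₀},
      ((∀ M : Model ar, EqForm.eval (fun _ => a) vc.e = true →
          clauseTrue M (VClause.ground vc fun _ => a)) ↔
        (∀ M : Model ar, EqForm.eval (fun _ => b) vc.e = true →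
          clauseTrue M (VClause.ground vc fun _ => b))) := by
  by_cases ha : a ∈ VClause.namesOf vc
  · exact ⟨a, Finset.mem_union_left _ ha, Iff.rfl⟩
  · refine ⟨b₀, Finset.mem_union_right _ (Finset.mem_singleton_self b₀), ?_⟩
    exact ⟨key_dir vc a b₀ ha hb₀, key_dir vc b₀ a hb₀ ha⟩

end ImplicitFOL
end

section
/- Let α be a ∀-clause of rank 1. If GND(α, 1) is satisfiable (some model satisfies every ground clause in it), then GND(α, z) is satisfiable for every z ≥ 1. -/
namespace ImplicitFOL

attribute [local instance] Classical.propDecidable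

variable {Pred : Type} {ar : Pred → ℕ}

variable [Countable Pred]

lemma eval_rename (r : ℕ → ℕ) (e : EqForm)
    (hr : ∀ (m : ℕ) (a : ℕ), a ∈ EqForm.namesOf e → ((r m == a) = (m == a))) (θ : ℕ → ℕ) :
    EqForm.eval (fun v => r (θ v)) e = EqForm.eval θ e := by
  induction e with
  | eq v n => exact hr (θ v) n (by simp [EqForm.namesOf])
  | not e ih =>
      simp only [EqForm.eval]
      rw [ih (fun m a ha => hr m a (by simpa [EqForm.namesOf] using ha))]
  | or e₁ e₂ ih₁ ih₂ =>
      simp only [EqForm.eval]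
      rw [ih₁ (fun m a ha => hr m a (by simp [EqForm.namesOf]; exact Or.inl ha)),
          ih₂ (fun m a ha => hr m a (by simp [EqForm.namesOf]; exact Or.inr ha))]
  | and e₁ e₂ ih₁ ih₂ =>
      simp only [EqForm.eval]
      rw [ih₁ (fun m a ha => hr m a (by simp [EqForm.namesOf]; exact Or.inl ha)),
          ih₂ (fun m a ha => hr m a (by simp [EqForm.namesOf]; exact Or.inr ha))]

lemma names_mem_foldr {Pred : Type} {ar : Pred → ℕ} (a : NGAtom ar) (l : List (NGAtom ar))
    (ha : a ∈ l) :
    NGAtom.namesOf a ⊆ l.foldr (fun a s => NGAtom.namesOf a ∪ s) ∅ := by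
  induction l with
  | nil => simp at ha
  | cons b t ih =>
      simp only [List.mem_cons] at ha
      rcases ha with rfl | ha
      · exact fun x hx => by simp [List.foldr]; exact Or.inl hx
      · exact fun x hx => by simp [List.foldr]; exact Or.inr (ih ha hx)

/-- Lemma: extending groundings preserves satisfiability:
for a ∀-clause of rank 1, if GND(α,1) is satisfiable then so is GND(α,z) for
every z ≥ 1. -/
theorem statement3
    (vc : VClause ar) (hrank : (VClause.varsOf vc).card = 1)
    (b₀ : ℕ) (hb₀ : b₀ ∉ VClause.namesOf vc)
    (hsat : ∃ M : Model ar, ∀ g ∈ gndOver {vc} ({b₀} : Finset ℕ), clauseTrue M g)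
    (z : ℕ) (hz : 1 ≤ z) (E : Finset ℕ) (hE : E.card = z)
    (hdisj : Disjoint E (VClause.namesOf vc)) :
    ∃ M : Model ar, ∀ g ∈ gndOver {vc} E, clauseTrue M g := by
  classical
  obtain ⟨M, hM⟩ := hsat
  set r : ℕ → ℕ := fun n => if n ∈ E then b₀ else n with hrdef
  refine ⟨fun p => M ⟨p.1, fun i => r (p.2 i)⟩, ?_⟩
  rintro g ⟨vc', hvc', θ, hθrange, heval, rfl⟩
  simp only [Finset.mem_singleton] at hvc'
  have hvc2 := hvc'.symm; subst hvc2
  have hnamesE : ∀ a ∈ VClause.namesOf vc, a ∉ E := fun a ha hae =>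
    (Finset.disjoint_left.mp hdisj) hae ha
  have hkb : kbNames ({vc} : Finset (VClause ar)) = VClause.namesOf vc := by
    simp [kbNames]
  have hrfix : ∀ a ∈ VClause.namesOf vc, r a = a := by
    intro a ha
    simp only [hrdef]
    rw [if_neg (hnamesE a ha)]
  have heval' : EqForm.eval (fun v => r (θ v)) vc.e = true := by
    rw [eval_rename]
    · exact heval
    · intro m a ha
      have haN : a ∈ VClause.namesOf vc := Finset.mem_union_left _ ha
      by_cases hm : m ∈ E
      · have h1 : r m = b₀ := if_pos hm
        have h2 : (r m == a) = false := by
          simp only [h1, beq_eq_false_iff_ne, ne_eq]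
          intro h; exact hb₀ (h ▸ haN)
        have h3 : (m == a) = false := by
          simp only [beq_eq_false_iff_ne, ne_eq]
          intro h; exact hnamesE a haN (h ▸ hm)
        rw [h2, h3]
      · simp only [hrdef, if_neg hm]
  have hmem : VClause.ground vc (fun v => r (θ v)) ∈ gndOver {vc} ({b₀} : Finset ℕ) := by
    refine ⟨vc, Finset.mem_singleton_self vc, fun v => r (θ v), ?_, heval', rfl⟩
    intro v
    have := hθrange v
    rw [Finset.mem_union] at this ⊢
    rcases this with h | h
    · left
      show r (θ v) ∈ kbNames {vc}
      rw [hrfix (θ v) (hkb ▸ h)]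
      exact h
    · right
      simp only [hrdef, if_pos h, Finset.mem_singleton]
  obtain ⟨l, hl, hlt⟩ := hM _ hmem
  simp only [VClause.ground, List.mem_toFinset, List.mem_map] at hl
  obtain ⟨a, haC, rfl⟩ := hl
  refine ⟨(true, NGAtom.subst θ a), ?_, ?_⟩
  · simp only [VClause.ground, List.mem_toFinset, List.mem_map]
    exact ⟨a, haC, rfl⟩
  · have hterm : ∀ i, r (Term.subst θ (a.2 i)) = Term.subst (fun v => r (θ v)) (a.2 i) := by
      intro i
      cases h : a.2 i with
      | var v => simp [Term.subst]
      | name n =>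
          simp only [Term.subst]
        
          have hn : n ∈ VClause.namesOf vc := by
            apply Finset.mem_union_right
            apply names_mem_foldr a vc.c haC
            simp only [NGAtom.namesOf, Finset.mem_biUnion]
            exact ⟨i, Finset.mem_univ i, by simp [h, Term.namesOf]⟩
          exact hrfix n hn
    simp only [litTrue, NGAtom.subst]
    have : (⟨a.1, fun i => r (Term.subst θ (a.2 i))⟩ : GAtom ar)
        = ⟨a.1, fun i => Term.subst (fun v => r (θ v)) (a.2 i)⟩ := by
      congr 1; funext i; exact hterm i
    rw [this]
    exact hlt

end ImplicitFOL
end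

section
/- Soundness of limited belief: for any set s of ground clauses, any ground clause φ, and any z ∈ ℕ, if s ⊨_z φ then s ⊨ φ, i.e., every model satisfying all clauses of s satisfies φ. -/
namespace ImplicitFOL

attribute [local instance] Classical.propDecidable

variable {Pred : Type} {ar : Pred → ℕ}

variable [Countable Pred]

theorem up_sound {s : Set (Clause ar)} {c : Clause ar} (h : UP s c)
    (M : Model ar) (hM : ∀ c ∈ s, clauseTrue M c) : clauseTrue M c := by
  induction h with
  | base hc => exact hM _ hc
  | unit hl hc ihl ihc =>
    obtain ⟨l', hl', hlt⟩ := ihl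
    simp only [Finset.mem_singleton] at hl'
    subst hl'
    obtain ⟨m, hm, hmt⟩ := ihc
    rcases Finset.mem_insert.mp hm with h | h
    · subst h
      simp only [litTrue, negLit] at hmt hlt
      rw [hlt] at hmt
      exact absurd hmt (by cases l'.1 <;> simp)
    · exact ⟨m, h, hmt⟩

theorem entailsAt_sound {z : ℕ} : ∀ {s : Set (Clause ar)} {φ : Clause ar},
    entailsAt z s φ → ∀ M : Model ar, (∀ c ∈ s, clauseTrue M c) → clauseTrue M φ := by
  induction z with
  | zero =>
    intro s φ h M hM
    obtain ⟨c', hup, hsub⟩ := h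
    obtain ⟨l, hl, hlt⟩ := up_sound hup M hM
    exact ⟨l, hsub hl, hlt⟩
  | succ z ih =>
    intro s φ h M hM
    obtain ⟨c, hc, hall⟩ := h
    obtain ⟨l, hl, hlt⟩ := hM c hc
    refine ih (hall l hl) M ?_
    intro c' hc'
    rcases hc' with h | h
    · subst h; exact ⟨l, Finset.mem_singleton_self l, hlt⟩
    · exact hM c' h

/-- Soundness of limited belief: if s ⊨_z φ then s ⊨ φ. -/
theorem statement4
    (s : Set (Clause ar)) (φ : Clause ar) (z : ℕ)
    (h : entailsAt z s φ)
    (M : Model ar) (hM : ∀ c ∈ s, clauseTrue M c) :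
    clauseTrue M φ := by
  exact entailsAt_sound h M hM

end ImplicitFOL
end

section
/- Limited entailment is restriction-closed: let Δ be a set of ground clauses, φ a ground clause, z ∈ ℕ, and N a partial model. If Δ ⊨_z φ, then (Δ|_N) ⊨_z (φ|_N), where restriction under N replaces each atom assigned a value by N with that truth value (so a clause containing a literal made true by N restricts to the trivially true clause, which is entailed at every level, and literals made false by N are deleted). -/
namespace ImplicitFOL

attribute [local instance] Classical.propDecidable

variable {Pred : Type} {ar : Pred → ℕ}

lemma UP.mono {s s' : Set (Clause ar)} (h : s ⊆ s') {c : Clause ar} (hc : UP s c) :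
    UP s' c := by
  induction hc with
  | base h' => exact UP.base (h h')
  | unit _ _ ih1 ih2 => exact UP.unit ih1 ih2

lemma entailsAt_mono : ∀ (z : ℕ) {s s' : Set (Clause ar)}, s ⊆ s' → ∀ {φ : Clause ar},
    entailsAt z s φ → entailsAt z s' φ
  | 0, _, _, h, _, ⟨c', hup, hsub⟩ => ⟨c', hup.mono h, hsub⟩
  | z+1, _, _, h, _, ⟨c, hc, hl⟩ =>
    ⟨c, h hc, fun l hlc => entailsAt_mono z (Set.insert_subset_insert h) (hl l hlc)⟩

lemma UP.nonempty {s : Set (Clause ar)} {c : Clause ar} (h : UP s c) : s.Nonempty := by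
  induction h with
  | base h => exact ⟨_, h⟩
  | unit _ _ ih _ => exact ih

lemma entailsAt_nonempty {z : ℕ} {s : Set (Clause ar)} {φ : Clause ar}
    (h : entailsAt z s φ) : s.Nonempty := by
  cases z with
  | zero => obtain ⟨c', hup, _⟩ := h; exact hup.nonempty
  | succ z => obtain ⟨c, hc, _⟩ := h; exact ⟨c, hc⟩

lemma entailsAt_succ {z : ℕ} {s : Set (Clause ar)} {φ : Clause ar}
    (h : entailsAt z s φ) : entailsAt (z+1) s φ := by
  obtain ⟨c₀, hc₀⟩ := entailsAt_nonempty h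
  exact ⟨c₀, hc₀, fun l _ => entailsAt_mono z (Set.subset_insert _ _) h⟩

lemma litTrueN_negLit {N : PartialModel ar} {l : Lit ar} :
    litTrueN N (negLit l) ↔ litFalseN N l := by
  simp [litTrueN, litFalseN, negLit]

lemma litFalseN_negLit {N : PartialModel ar} {l : Lit ar} :
    litFalseN N (negLit l) ↔ litTrueN N l := by
  simp [litTrueN, litFalseN, negLit]

lemma not_litTrueN_and_litFalseN {N : PartialModel ar} {l : Lit ar}
    (h1 : litTrueN N l) (h2 : litFalseN N l) : False := by
  rw [litTrueN] at h1; rw [litFalseN, h1] at h2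
  simp at h2

lemma UP.restrict {N : PartialModel ar} {Δ : Set (Clause ar)} {c : Clause ar}
    (h : UP Δ c) :
    (∃ l ∈ c, litTrueN N l) ∨
      ∃ c', UP (restrictSet N Δ) c' ∧ c' ⊆ c.filter (fun l => ¬ litFalseN N l) := by
  induction h with
  | @base d hd =>
    by_cases ht : ∃ l ∈ d, litTrueN N l
    · exact Or.inl ht
    · refine Or.inr ⟨d.filter (fun l => ¬ litFalseN N l), UP.base ?_, le_refl _⟩
      exact ⟨d, hd, by rw [restrictClause, if_neg ht]⟩
  | @unit l d _ _ ih1 ih2 =>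
    by_cases hlt : litTrueN N l
    · -- negLit l is false under N
      have hnf : litFalseN N (negLit l) := litFalseN_negLit.mpr hlt
      rcases ih2 with ⟨l', hl', htl'⟩ | ⟨c₂, hup₂, hsub₂⟩
      · rcases Finset.mem_insert.mp hl' with rfl | hl'c
        · exact absurd (litTrueN_negLit.mp htl') (fun hf => not_litTrueN_and_litFalseN hlt hf)
        · exact Or.inl ⟨l', hl'c, htl'⟩
      · rw [Finset.filter_insert, if_neg (by simpa using hnf)] at hsub₂
        exact Or.inr ⟨c₂, hup₂, hsub₂⟩
    · rcases ih1 with ⟨l', hl', htl'⟩ | ⟨c₁, hup₁, hsub₁⟩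
      · rw [Finset.mem_singleton] at hl'; subst hl'; exact absurd htl' hlt
      · by_cases hlf : litFalseN N l
        · rw [Finset.filter_singleton, if_neg (by simpa using hlf)] at hsub₁
          have : c₁ = ∅ := Finset.subset_empty.mp hsub₁
          subst this
          exact Or.inr ⟨∅, hup₁, Finset.empty_subset _⟩
        · rw [Finset.filter_singleton, if_pos (by simpa using hlf)] at hsub₁
          rcases Finset.subset_singleton_iff.mp hsub₁ with rfl | rfl
          · exact Or.inr ⟨∅, hup₁, Finset.empty_subset _⟩
          · rcases ih2 with ⟨l', hl', htl'⟩ | ⟨c₂, hup₂, hsub₂⟩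
            · rcases Finset.mem_insert.mp hl' with rfl | hl'c
              · exact absurd (litTrueN_negLit.mp htl') hlf
              · exact Or.inl ⟨l', hl'c, htl'⟩
            · have hPneg : ¬ litFalseN N (negLit l) := fun hf => hlt (litFalseN_negLit.mp hf)
              rw [Finset.filter_insert, if_pos (by simpa using hPneg)] at hsub₂
              by_cases hmem : negLit l ∈ c₂
              · refine Or.inr ⟨c₂.erase (negLit l), ?_, ?_⟩
                · refine UP.unit hup₁ ?_
                  rw [Finset.insert_erase hmem]; exact hup₂
                · intro x hx
                  rcases Finset.mem_insert.mp (hsub₂ (Finset.mem_of_mem_erase hx)) with rfl | h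
                  · exact absurd rfl (Finset.ne_of_mem_erase hx)
                  · exact h
              · refine Or.inr ⟨c₂, hup₂, fun x hx => ?_⟩
                rcases Finset.mem_insert.mp (hsub₂ hx) with rfl | h
                · exact absurd hx hmem
                · exact h

lemma restrictSet_insert_none {N : PartialModel ar} {Δ : Set (Clause ar)} {c₀ : Clause ar}
    (h : restrictClause N c₀ = none) :
    restrictSet N (insert c₀ Δ) = restrictSet N Δ := by
  ext x
  constructor
  · rintro ⟨c, hc, hr⟩
    rcases hc with rfl | hc
    · rw [h] at hr; cases hr
    · exact ⟨c, hc, hr⟩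
  · rintro ⟨c, hc, hr⟩; exact ⟨c, Or.inr hc, hr⟩

lemma restrictSet_insert_some {N : PartialModel ar} {Δ : Set (Clause ar)} {c₀ c₀' : Clause ar}
    (h : restrictClause N c₀ = some c₀') :
    restrictSet N (insert c₀ Δ) = insert c₀' (restrictSet N Δ) := by
  ext x
  constructor
  · rintro ⟨c, hc, hr⟩
    rcases hc with rfl | hc
    · rw [h] at hr; cases hr; exact Or.inl rfl
    · exact Or.inr ⟨c, hc, hr⟩
  · rintro (rfl | ⟨c, hc, hr⟩)
    · exact ⟨c₀, Or.inl rfl, h⟩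
    · exact ⟨c, Or.inr hc, hr⟩

lemma statement5_aux (N : PartialModel ar) :
    ∀ (z : ℕ) (Δ : Set (Clause ar)) (φ : Clause ar),
      entailsAt z Δ φ → entailsAtOpt z (restrictSet N Δ) (restrictClause N φ) := by
  intro z
  induction z with
  | zero =>
    intro Δ φ h
    obtain ⟨c', hup, hsub⟩ := h
    by_cases hφ : ∃ l ∈ φ, litTrueN N l
    · rw [restrictClause, if_pos hφ]; trivial
    · rw [restrictClause, if_neg hφ]
      rcases UP.restrict (N := N) hup with ⟨l, hl, htl⟩ | ⟨c'', hup'', hsub''⟩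
      · exact absurd ⟨l, hsub hl, htl⟩ hφ
      · exact ⟨c'', hup'', hsub''.trans (Finset.filter_subset_filter _ hsub)⟩
  | succ z ih =>
    intro Δ φ h
    obtain ⟨c, hcΔ, hl⟩ := h
    by_cases hφ : ∃ l ∈ φ, litTrueN N l
    · rw [restrictClause, if_pos hφ]; trivial
    · rw [restrictClause, if_neg hφ]
      by_cases hct : ∃ l ∈ c, litTrueN N l
      · obtain ⟨l, hlc, htl⟩ := hct
        have hres : restrictClause N ({l} : Clause ar) = none := by
          rw [restrictClause, if_pos ⟨l, Finset.mem_singleton_self l, htl⟩]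
        have := ih (insert ({l} : Clause ar) Δ) φ (hl l hlc)
        rw [restrictClause, if_neg hφ, restrictSet_insert_none hres] at this
        exact entailsAt_succ this
      · have hresc : restrictClause N c = some (c.filter (fun l => ¬ litFalseN N l)) := by
          rw [restrictClause, if_neg hct]
        refine ⟨c.filter (fun l => ¬ litFalseN N l), ⟨c, hcΔ, hresc⟩, ?_⟩
        intro l hlf
        have hlc : l ∈ c := Finset.mem_of_mem_filter _ hlf
        have hlnf : ¬ litFalseN N l := by
          have := Finset.mem_filter.mp hlf; simpa using this.2
        have hlnt : ¬ litTrueN N l := fun hf => hct ⟨l, hlc, hf⟩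
        have hres : restrictClause N ({l} : Clause ar) = some ({l} : Clause ar) := by
          rw [restrictClause, if_neg (by simpa using hlnt)]
          congr 1
          rw [Finset.filter_singleton, if_pos (by simpa using hlnf)]
        have := ih (insert ({l} : Clause ar) Δ) φ (hl l hlc)
        rw [restrictClause, if_neg hφ, restrictSet_insert_some hres] at this
        exact this

variable [Countable Pred]

/-- Limited entailment is restriction-closed:
if Δ ⊨_z φ then (Δ|_N) ⊨_z (φ|_N), where a clause with a literal made true by N
restricts to the trivially true clause (entailed at every level) and literals
made false by N are deleted. -/
theorem statement5
    (Δ : Set (Clause ar)) (φ : Clause ar) (z : ℕ) (N : PartialModel ar)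
    (h : entailsAt z Δ φ) :
    entailsAtOpt z (restrictSet N Δ) (restrictClause N φ) :=
  statement5_aux N z Δ φ h

end ImplicitFOL
end
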